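/- Let R_0, R_1, R_2 be contractions and ρ a density operator with Re Tr(R_0 R_1 ρ) ≥ 1 − O(ε) and Re Tr(R_1* R_2 ρ) ≥ 1 − O(ε). Then Re Tr(R_0 R_2 ρ) ≥ 1 − O(ε). -/

import Mathlib

open Matrix ComplexOrder

/-- A matrix is a contraction if `RᴴR ⪯ I`, i.e. its operator norm is at most `1`. -/
def IsContraction {n : ℕ} (R : Matrix (Fin n) (Fin n) ℂ) : Prop :=
  ((1 : Matrix (Fin n) (Fin n) ℂ) - Rᴴ * R).PosSemidef

/-- Abstract three-point inner product lemma. -/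
lemma aux_inner {E : Type*} [NormedAddCommGroup E] [InnerProductSpace ℂ E]
    (a b c : E) (ha : ‖a‖ ≤ 1) (hb : ‖b‖ ≤ 1) (hc : ‖c‖ ≤ 1) {δ : ℝ} (hδ : 0 ≤ δ)
    (h1 : 1 - δ ≤ (inner ℂ a b : ℂ).re) (h2 : 1 - δ ≤ (inner ℂ b c : ℂ).re) :
    1 - 4 * δ ≤ (inner ℂ a c : ℂ).re := by
  have e1 : ‖a - b‖ ^ 2 = ‖a‖ ^ 2 - 2 * (inner ℂ a b : ℂ).re + ‖b‖ ^ 2 := by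
    simpa using @norm_sub_sq ℂ E _ _ _ a b
  have e2 : ‖b - c‖ ^ 2 = ‖b‖ ^ 2 - 2 * (inner ℂ b c : ℂ).re + ‖c‖ ^ 2 := by
    simpa using @norm_sub_sq ℂ E _ _ _ b c
  have hab : ‖a - b‖ ^ 2 ≤ 2 * δ := by nlinarith [norm_nonneg a, norm_nonneg b]
  have hbc : ‖b - c‖ ^ 2 ≤ 2 * δ := by nlinarith [norm_nonneg b, norm_nonneg c]
  have hid : (inner ℂ a c : ℂ) = inner ℂ (a - b) (c - b) + inner ℂ a b + inner ℂ b c - inner ℂ b b := by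
    simp only [inner_sub_left, inner_sub_right]
    ring
  have hbb : (inner ℂ b b : ℂ).re = ‖b‖ ^ 2 := by
    simpa using inner_self_eq_norm_sq (𝕜 := ℂ) b
  have hcs : ‖(inner ℂ (a - b) (c - b) : ℂ)‖ ≤ ‖a - b‖ * ‖c - b‖ := norm_inner_le_norm _ _
  have hre : |(inner ℂ (a - b) (c - b) : ℂ).re| ≤ ‖a - b‖ * ‖c - b‖ :=
    (Complex.abs_re_le_norm _).trans hcs
  have hcb : ‖c - b‖ = ‖b - c‖ := norm_sub_rev _ _
  have hprod : ‖a - b‖ * ‖b - c‖ ≤ 2 * δ := by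
    nlinarith [norm_nonneg (a - b), norm_nonneg (b - c)]
  have hsplit : (inner ℂ a c : ℂ).re = (inner ℂ (a - b) (c - b) : ℂ).re + (inner ℂ a b : ℂ).re
      + (inner ℂ b c : ℂ).re - (inner ℂ b b : ℂ).re := by
    rw [hid]; simp
  rw [hsplit, hbb]
  rw [hcb] at hre
  have hlow : -(2 * δ) ≤ (inner ℂ (a - b) (c - b) : ℂ).re := by
    have := (abs_le.mp hre).1
    linarith
  have hb2 : ‖b‖ ^ 2 ≤ 1 := by nlinarith [norm_nonneg b]
  linarith

/-- For PSD `P` and Hermitian `S`, `Re Tr(P S S) ≥ 0`. -/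
lemma trace_hermitian_sandwich {n : ℕ} (S P : Matrix (Fin n) (Fin n) ℂ) (hS : Sᴴ = S)
    (hP : P.PosSemidef) : 0 ≤ ((P * (S * S)).trace).re := by
  have key : (P * (S * S)).trace = (S * P * S).trace := by
    rw [show P * (S * S) = (P * S) * S from (Matrix.mul_assoc P S S).symm,
      Matrix.trace_mul_comm, Matrix.mul_assoc, ← Matrix.mul_assoc]
  rw [key, Matrix.trace]
  simp only [Complex.re_sum]
  apply Finset.sum_nonneg
  intro i _
  have h := hP.dotProduct_mulVec_nonneg (fun j => S j i)
  have hre : 0 ≤ (star (fun j => S j i) ⬝ᵥ P.mulVec (fun j => S j i)).re := by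
    rw [Complex.le_def] at h
    simpa using h.1
  have heq : (S * P * S).diag i = star (fun j => S j i) ⬝ᵥ P.mulVec (fun j => S j i) := by
    simp only [Matrix.diag, Matrix.mul_apply, dotProduct, Matrix.mulVec, Pi.star_apply,
      RCLike.star_def, Finset.sum_mul, Finset.mul_sum]
    rw [Finset.sum_comm]
    apply Finset.sum_congr rfl
    intro j _
    apply Finset.sum_congr rfl
    intro k _
    have hji : S i j = (starRingEnd ℂ) (S j i) := by
      conv_lhs => rw [← hS]
      simp [Matrix.conjTranspose_apply]
    rw [hji]; ring
  rw [heq]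
  exact hre

/-- Vectorization of `M * S` as a Euclidean vector. -/
noncomputable def vecS {n : ℕ} (S M : Matrix (Fin n) (Fin n) ℂ) :
    EuclideanSpace ℂ (Fin n × Fin n) :=
  (WithLp.equiv 2 ((Fin n × Fin n) → ℂ)).symm (fun p => (M * S) p.1 p.2)

lemma inner_vec_eq_trace {n : ℕ} (S A B : Matrix (Fin n) (Fin n) ℂ) (hS : Sᴴ = S) :
    (inner ℂ (vecS S A) (vecS S B) : ℂ) = (Aᴴ * B * (S * S)).trace := by
  have h1 : (inner ℂ (vecS S A) (vecS S B) : ℂ)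
      = ∑ p : Fin n × Fin n, (starRingEnd ℂ) ((A * S) p.1 p.2) * (B * S) p.1 p.2 := by
    simp [vecS, PiLp.inner_apply, RCLike.inner_apply, mul_comm]
  have e : Aᴴ * B * (S * S) = (Aᴴ * B * S) * S := by noncomm_ring
  have e2 : (A * S)ᴴ * (B * S) = S * (Aᴴ * B * S) := by
    rw [Matrix.conjTranspose_mul, hS]; noncomm_ring
  have h2 : (Aᴴ * B * (S * S)).trace = ((A * S)ᴴ * (B * S)).trace := by
    rw [e, e2, Matrix.trace_mul_comm]
  rw [h1, h2, Matrix.trace]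
  simp only [Matrix.diag, Matrix.mul_apply, Matrix.conjTranspose_apply]
  rw [Fintype.sum_prod_type]
  rw [Finset.sum_comm]
  simp [Matrix.mul_apply]

/-- The adjoint of a contraction is a contraction. -/
lemma isContraction_conjTranspose {n : ℕ} {R : Matrix (Fin n) (Fin n) ℂ}
    (h : IsContraction R) : IsContraction Rᴴ := by
  set e : (Fin n → ℂ) → EuclideanSpace ℂ (Fin n) := ⇑(WithLp.equiv 2 ((Fin n) → ℂ)).symm with he
  have key1 : ∀ u v : Fin n → ℂ, (inner ℂ (e u) (e v) : ℂ) = star u ⬝ᵥ v := by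
    intro u v
    simp [he, PiLp.inner_apply, RCLike.inner_apply, dotProduct, mul_comm]
  have keynorm : ∀ u : Fin n → ℂ, ‖e u‖ ^ 2 = (star u ⬝ᵥ u).re := by
    intro u
    rw [← key1 u u]
    exact (inner_self_eq_norm_sq (𝕜 := ℂ) (e u)).symm
  have hnorm : ∀ y : Fin n → ℂ, ‖e (R *ᵥ y)‖ ≤ ‖e y‖ := by
    intro y
    have h2 := h.dotProduct_mulVec_nonneg y
    have hexp : star y ⬝ᵥ ((1 - Rᴴ * R) *ᵥ y) = star y ⬝ᵥ y - star (R *ᵥ y) ⬝ᵥ (R *ᵥ y) := by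
      simp [sub_mulVec, dotProduct_sub, star_mulVec, dotProduct_mulVec, vecMul_vecMul]
    rw [hexp, Complex.le_def] at h2
    have hre : (star (R *ᵥ y) ⬝ᵥ (R *ᵥ y)).re ≤ (star y ⬝ᵥ y).re := by
      have := h2.1
      simp only [Complex.sub_re, Complex.zero_re] at this
      linarith
    have h3 : ‖e (R *ᵥ y)‖ ^ 2 ≤ ‖e y‖ ^ 2 := by rw [keynorm, keynorm]; exact hre
    have := norm_nonneg (e (R *ᵥ y)); have := norm_nonneg (e y)
    nlinarith
  refine Matrix.PosSemidef.of_dotProduct_mulVec_nonneg ?_ ?_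
  · rw [Matrix.IsHermitian]
    simp [Matrix.conjTranspose_sub, Matrix.conjTranspose_mul]
  · intro x
    set w : Fin n → ℂ := Rᴴ *ᵥ x with hw
    have hexp : star x ⬝ᵥ ((1 - Rᴴᴴ * Rᴴ) *ᵥ x) = star x ⬝ᵥ x - star w ⬝ᵥ w := by
      simp [hw, sub_mulVec, dotProduct_sub, star_mulVec, dotProduct_mulVec, vecMul_vecMul]
    rw [hexp, Complex.le_def]
    have him1 : (star x ⬝ᵥ x).im = 0 := by
      have := dotProduct_star_self_nonneg x
      rw [Complex.le_def] at this
      simpa using this.2.symm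
    have him2 : (star w ⬝ᵥ w).im = 0 := by
      have := dotProduct_star_self_nonneg w
      rw [Complex.le_def] at this
      simpa using this.2.symm
    refine ⟨?_, by simp [him1, him2]⟩
    simp only [Complex.zero_re, Complex.sub_re]
    have hsw : star w ⬝ᵥ w = star x ⬝ᵥ (R *ᵥ w) := by
      rw [hw, star_mulVec, dotProduct_mulVec, vecMul_vecMul]
      simp [star_mulVec, dotProduct_mulVec]
    have hcs : (star x ⬝ᵥ (R *ᵥ w)).re ≤ ‖e x‖ * ‖e (R *ᵥ w)‖ := by
      rw [← key1]
      calc (inner ℂ (e x) (e (R *ᵥ w)) : ℂ).re ≤ ‖(inner ℂ (e x) (e (R *ᵥ w)) : ℂ)‖ :=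
        Complex.re_le_norm _
      _ ≤ ‖e x‖ * ‖e (R *ᵥ w)‖ := norm_inner_le_norm _ _
    have hchain : (star w ⬝ᵥ w).re ≤ ‖e x‖ * ‖e w‖ := by
      rw [hsw]
      exact hcs.trans (by
        have := hnorm w
        have hx := norm_nonneg (e x)
        nlinarith)
    have hw2 : ‖e w‖ ^ 2 ≤ ‖e x‖ * ‖e w‖ := by rw [keynorm]; exact hchain
    have hx2 : (star x ⬝ᵥ x).re = ‖e x‖ ^ 2 := (keynorm x).symm
    have hww : (star w ⬝ᵥ w).re = ‖e w‖ ^ 2 := keynorm w ▸ rfl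
    rw [hx2, hww]
    have := norm_nonneg (e w); have := norm_nonneg (e x)
    nlinarith [sq_nonneg (‖e x‖ - ‖e w‖)]

open scoped MatrixOrder in
lemma exists_herm_sqrt {n : ℕ} {ρ : Matrix (Fin n) (Fin n) ℂ} (hρ : ρ.PosSemidef) :
    ∃ S : Matrix (Fin n) (Fin n) ℂ, Sᴴ = S ∧ S * S = ρ :=
  ⟨CFC.sqrt ρ, (CFC.sqrt_nonneg ρ).posSemidef.isHermitian, CFC.sqrt_mul_sqrt_self ρ hρ.nonneg⟩

/-- Transitivity of approximate stabilization: if `Re Tr(R₀R₁ρ) ≥ 1 − O(ε)` and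
`Re Tr(R₁*R₂ρ) ≥ 1 − O(ε)` for contractions, then `Re Tr(R₀R₂ρ) ≥ 1 − O(ε)`. -/
theorem approx_stab_trans :
    ∀ C₁ : ℝ, 0 < C₁ → ∃ C₂ : ℝ, 0 < C₂ ∧
      ∀ (n : ℕ) (R0 R1 R2 ρ : Matrix (Fin n) (Fin n) ℂ) (ε : ℝ),
        IsContraction R0 → IsContraction R1 → IsContraction R2 →
        ρ.PosSemidef → ρ.trace = 1 → 0 ≤ ε →
        1 - C₁ * ε ≤ ((R0 * R1 * ρ).trace).re →
        1 - C₁ * ε ≤ ((R1ᴴ * R2 * ρ).trace).re →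
        1 - C₂ * ε ≤ ((R0 * R2 * ρ).trace).re := by
  intro C₁ hC₁
  refine ⟨4 * C₁, by positivity, ?_⟩
  intro n R0 R1 R2 ρ ε h0 h1 h2 hρ htr hε hT1 hT2
  obtain ⟨S, hS, hSS⟩ := exists_herm_sqrt hρ
  -- norm bound for contractions
  have hnb : ∀ A : Matrix (Fin n) (Fin n) ℂ, IsContraction A → ‖vecS S A‖ ≤ 1 := by
    intro A hA
    have hpsd : 0 ≤ (((1 - Aᴴ * A) * (S * S)).trace).re :=
      trace_hermitian_sandwich S _ hS hA
    have hsplit : ((1 - Aᴴ * A) * (S * S)).trace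
        = (S * S).trace - (Aᴴ * A * (S * S)).trace := by
      rw [Matrix.sub_mul, Matrix.one_mul, Matrix.trace_sub]
    rw [hsplit, hSS, htr] at hpsd
    have htrA : ((Aᴴ * A * ρ).trace).re ≤ 1 := by
      simp only [Complex.sub_re, Complex.one_re] at hpsd
      linarith
    have hn2 : ‖vecS S A‖ ^ 2 = ((Aᴴ * A * ρ).trace).re := by
      have ht := inner_vec_eq_trace S A A hS
      rw [hSS] at ht
      have hinner : (inner ℂ (vecS S A) (vecS S A) : ℂ).re = ‖vecS S A‖ ^ 2 := by
        simpa using inner_self_eq_norm_sq (𝕜 := ℂ) (vecS S A)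
      rw [← ht]
      exact hinner.symm
    have := norm_nonneg (vecS S A)
    nlinarith
  have ha : ‖vecS S R0ᴴ‖ ≤ 1 := hnb R0ᴴ (isContraction_conjTranspose h0)
  have hb : ‖vecS S R1‖ ≤ 1 := hnb R1 h1
  have hc : ‖vecS S R2‖ ≤ 1 := hnb R2 h2
  have k1 : (inner ℂ (vecS S R0ᴴ) (vecS S R1) : ℂ) = (R0 * R1 * ρ).trace := by
    rw [inner_vec_eq_trace _ _ _ hS, Matrix.conjTranspose_conjTranspose, hSS]
  have k2 : (inner ℂ (vecS S R1) (vecS S R2) : ℂ) = (R1ᴴ * R2 * ρ).trace := by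
    rw [inner_vec_eq_trace _ _ _ hS, hSS]
  have k3 : (inner ℂ (vecS S R0ᴴ) (vecS S R2) : ℂ) = (R0 * R2 * ρ).trace := by
    rw [inner_vec_eq_trace _ _ _ hS, Matrix.conjTranspose_conjTranspose, hSS]
  have hδ : (0 : ℝ) ≤ C₁ * ε := by positivity
  have main := aux_inner (vecS S R0ᴴ) (vecS S R1) (vecS S R2) ha hb hc hδ
    (by rw [k1]; exact hT1) (by rw [k2]; exact hT2)
  rw [k3] at main
  calc 1 - 4 * C₁ * ε = 1 - 4 * (C₁ * ε) := by ring
  _ ≤ _ := main
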